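/- arXiv:2103.00717 — 4 statements merged into one kernel-verified Lean document; each statement's English description precedes it below -/
import Mathlib

section
/- Let u* = (x*, y*) be a local minimizer of the problem min{ p(x) : (x,y) ∈ K }, where K is a convex subset of [0,1]^n × ℝ^q and p(x) = Σ_{i=1}^n min(x_i, 1-x_i). Then the affine function l_{u*} satisfies l_{u*}(x) ≥ l_{u*}(x*) for all (x,y) ∈ K. -/
open Finset Set

/-- If u* = (x*,y*) is a local minimizer of p over the convex set
K ⊆ [0,1]^n × ℝ^q, then l_{u*}(x) ≥ l_{u*}(x*) for all (x,y) ∈ K. -/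
theorem stmt_5 (n q : ℕ) (hn : 1 ≤ n)
    (K : Set ((Fin n → ℝ) × (Fin q → ℝ)))
    (hKne : K.Nonempty) (hKconv : Convex ℝ K)
    (hKbox : ∀ u ∈ K, ∀ i, u.1 i ∈ Set.Icc (0:ℝ) 1)
    (xs : Fin n → ℝ) (ys : Fin q → ℝ) (hu : (xs, ys) ∈ K)
    (hloc : ∃ r > (0:ℝ), ∀ u ∈ K, ‖u - (xs, ys)‖ < r →
      (∑ i, min (xs i) (1 - xs i)) ≤ ∑ i, min (u.1 i) (1 - u.1 i)) :
    ∀ u ∈ K,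
      (∑ i ∈ univ.filter (fun i => xs i ≤ 1/2), u.1 i
        + ∑ j ∈ univ.filter (fun j => ¬ xs j ≤ 1/2), (1 - u.1 j))
      ≥ (∑ i ∈ univ.filter (fun i => xs i ≤ 1/2), xs i
        + ∑ j ∈ univ.filter (fun j => ¬ xs j ≤ 1/2), (1 - xs j)) := by
  obtain ⟨r, hr, hloc⟩ := hloc
  intro u huK
  by_cases hue : u = (xs, ys)
  · subst hue; exact le_refl _
  have hd0 : 0 < ‖u - (xs, ys)‖ := by
    simpa using sub_ne_zero.mpr hue
  set d := ‖u - (xs, ys)‖ with hd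
  set t : ℝ := min 1 (r / (2 * d)) with ht
  have ht0 : 0 < t := lt_min one_pos (by positivity)
  have ht1 : t ≤ 1 := min_le_left _ _
  have hv : (1 - t) • ((xs, ys) : (Fin n → ℝ) × (Fin q → ℝ)) + t • u ∈ K :=
    hKconv hu huK (by linarith) ht0.le (by ring)
  set v := (1 - t) • ((xs, ys) : (Fin n → ℝ) × (Fin q → ℝ)) + t • u with hvdef
  have hnorm : ‖v - (xs, ys)‖ < r := by
    have hveq : v - (xs, ys) = t • (u - (xs, ys)) := by
      rw [hvdef]; module
    rw [hveq, norm_smul, Real.norm_eq_abs, abs_of_pos ht0, ← hd]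
    have h2 : t ≤ r / (2 * d) := min_le_right _ _
    have : t * d ≤ (r / (2 * d)) * d := by nlinarith
    have hrd : (r / (2 * d)) * d = r / 2 := by field_simp
    linarith
  have hp := hloc v hv hnorm
  have hA : ∀ i, v.1 i = (1 - t) * xs i + t * u.1 i := by
    intro i
    simp [hvdef, Prod.fst_add, Prod.smul_fst]
  -- p(xs) = l(xs)
  have hlxs : (∑ i, min (xs i) (1 - xs i))
      = ∑ i ∈ univ.filter (fun i => xs i ≤ 1/2), xs i
        + ∑ j ∈ univ.filter (fun j => ¬ xs j ≤ 1/2), (1 - xs j) := by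
    rw [← Finset.sum_filter_add_sum_filter_not univ (fun i => xs i ≤ 1/2)]
    congr 1
    · apply Finset.sum_congr rfl
      intro i hi
      rw [Finset.mem_filter] at hi
      exact min_eq_left (by linarith [hi.2])
    · apply Finset.sum_congr rfl
      intro i hi
      rw [Finset.mem_filter] at hi
      have := hi.2
      exact min_eq_right (by push_neg at this; linarith)
  -- p(v) ≤ l applied to v
  have hpv : (∑ i, min (v.1 i) (1 - v.1 i))
      ≤ ∑ i ∈ univ.filter (fun i => xs i ≤ 1/2), v.1 i
        + ∑ j ∈ univ.filter (fun j => ¬ xs j ≤ 1/2), (1 - v.1 j) := by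
    rw [← Finset.sum_filter_add_sum_filter_not univ (fun i => xs i ≤ 1/2)]
    gcongr with i hi j hj
    · exact min_le_left _ _
    · exact min_le_right _ _
  -- l(v) = (1-t) l(xs) + t l(u)
  set A := ∑ i ∈ univ.filter (fun i => xs i ≤ 1/2), xs i
        + ∑ j ∈ univ.filter (fun j => ¬ xs j ≤ 1/2), (1 - xs j) with hAdef
  set B := ∑ i ∈ univ.filter (fun i => xs i ≤ 1/2), u.1 i
        + ∑ j ∈ univ.filter (fun j => ¬ xs j ≤ 1/2), (1 - u.1 j) with hBdef
  have hlv : (∑ i ∈ univ.filter (fun i => xs i ≤ 1/2), v.1 i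
        + ∑ j ∈ univ.filter (fun j => ¬ xs j ≤ 1/2), (1 - v.1 j))
      = (1 - t) * A + t * B := by
    rw [hAdef, hBdef]
    simp only [hA]
    rw [Finset.sum_congr rfl (fun j _ => show (1 : ℝ) - ((1-t) * xs j + t * u.1 j)
        = (1-t) * (1 - xs j) + t * (1 - u.1 j) by ring)]
    simp [Finset.sum_add_distrib, ← Finset.mul_sum]
    ring
  have : A ≤ (1 - t) * A + t * B := by
    calc A = ∑ i, min (xs i) (1 - xs i) := hlxs.symm
    _ ≤ ∑ i, min (v.1 i) (1 - v.1 i) := hp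
    _ ≤ _ := hpv.trans (le_of_eq hlv)
  nlinarith
end

section
/- Let t ≥ 0 and let u*(t) = (x*, y*) be a local minimizer over a convex set K of the penalized objective F(x,y) = c·x + d·y + t·p(x), where p(x) = Σ_{i=1}^n min(x_i, 1-x_i). Then c·x* + d·y* + t·l_{u*}(x*) ≤ c·x + d·y + t·l_{u*}(x) for all (x,y) ∈ K, where l_{u*} is the affine function associated with u*. -/
open Finset Set

/-- If u* = (x*,y*) is a local minimizer over a convex set K of the
penalized objective F(x,y) = c·x + d·y + t·p(x) with t ≥ 0, then
c·x* + d·y* + t·l_{u*}(x*) ≤ c·x + d·y + t·l_{u*}(x) for all (x,y) ∈ K. -/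
theorem stmt_6 (n q : ℕ) (hn : 1 ≤ n)
    (c : Fin n → ℝ) (d : Fin q → ℝ) (t : ℝ) (ht : 0 ≤ t)
    (K : Set ((Fin n → ℝ) × (Fin q → ℝ)))
    (hKne : K.Nonempty) (hKconv : Convex ℝ K)
    (hKbox : ∀ u ∈ K, ∀ i, u.1 i ∈ Set.Icc (0:ℝ) 1)
    (xs : Fin n → ℝ) (ys : Fin q → ℝ) (hu : (xs, ys) ∈ K)
    (hloc : ∃ r > (0:ℝ), ∀ u ∈ K, ‖u - (xs, ys)‖ < r →
      (∑ i, c i * xs i) + (∑ j, d j * ys j) + t * ∑ i, min (xs i) (1 - xs i)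
        ≤ (∑ i, c i * u.1 i) + (∑ j, d j * u.2 j) + t * ∑ i, min (u.1 i) (1 - u.1 i)) :
    ∀ u ∈ K,
      (∑ i, c i * xs i) + (∑ j, d j * ys j)
        + t * (∑ i ∈ univ.filter (fun i => xs i ≤ 1/2), xs i
            + ∑ j ∈ univ.filter (fun j => ¬ xs j ≤ 1/2), (1 - xs j))
      ≤ (∑ i, c i * u.1 i) + (∑ j, d j * u.2 j)
        + t * (∑ i ∈ univ.filter (fun i => xs i ≤ 1/2), u.1 i
            + ∑ j ∈ univ.filter (fun j => ¬ xs j ≤ 1/2), (1 - u.1 j)) := by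
  classical
  set G : (Fin n → ℝ) × (Fin q → ℝ) → ℝ := fun u =>
    (∑ i, c i * u.1 i) + (∑ j, d j * u.2 j)
      + t * (∑ i ∈ univ.filter (fun i => xs i ≤ 1/2), u.1 i
          + ∑ j ∈ univ.filter (fun j => ¬ xs j ≤ 1/2), (1 - u.1 j)) with hG
  set F : (Fin n → ℝ) × (Fin q → ℝ) → ℝ := fun u =>
    (∑ i, c i * u.1 i) + (∑ j, d j * u.2 j) + t * ∑ i, min (u.1 i) (1 - u.1 i) with hF
  -- p ≤ l pointwise
  have hPL : ∀ v : Fin n → ℝ,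
      (∑ i, min (v i) (1 - v i)) ≤
        (∑ i ∈ univ.filter (fun i => xs i ≤ 1/2), v i
          + ∑ j ∈ univ.filter (fun j => ¬ xs j ≤ 1/2), (1 - v j)) := by
    intro v
    rw [← Finset.sum_filter_add_sum_filter_not univ (fun i => xs i ≤ 1/2)
        (fun i => min (v i) (1 - v i))]
    gcongr with i hi j hj
    · exact min_le_left _ _
    · exact min_le_right _ _
  have hFG : ∀ u, F u ≤ G u := by
    intro u
    have := mul_le_mul_of_nonneg_left (hPL u.1) ht
    simp only [hF, hG]
    linarith
  have hEq : F (xs, ys) = G (xs, ys) := by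
    simp only [hF, hG]
    congr 1
    congr 1
    rw [← Finset.sum_filter_add_sum_filter_not univ (fun i => xs i ≤ 1/2)
        (fun i => min (xs i) (1 - xs i))]
    congr 1
    · refine Finset.sum_congr rfl fun i hi => ?_
      rw [Finset.mem_filter] at hi
      exact min_eq_left (by linarith [hi.2])
    · refine Finset.sum_congr rfl fun i hi => ?_
      rw [Finset.mem_filter] at hi
      have : ¬ xs i ≤ 1/2 := hi.2
      exact min_eq_right (by push_neg at this; linarith)
  -- affinity of G
  have haff : ∀ (s : ℝ) (u : (Fin n → ℝ) × (Fin q → ℝ)),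
      G (s • u + (1 - s) • (xs, ys)) = s * G u + (1 - s) * G (xs, ys) := by
    intro s u
    have hfst : (s • u + (1 - s) • (xs, ys)).1 = fun i => s * u.1 i + (1 - s) * xs i := by
      funext i; simp
    have hsnd : (s • u + (1 - s) • (xs, ys)).2 = fun j => s * u.2 j + (1 - s) * ys j := by
      funext j; simp
    simp only [hG, hfst, hsnd]
    have h1 : ∑ i, c i * (s * u.1 i + (1 - s) * xs i)
        = s * ∑ i, c i * u.1 i + (1 - s) * ∑ i, c i * xs i := by
      rw [Finset.mul_sum, Finset.mul_sum, ← Finset.sum_add_distrib]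
      exact Finset.sum_congr rfl fun i _ => by ring
    have h2 : ∑ j, d j * (s * u.2 j + (1 - s) * ys j)
        = s * ∑ j, d j * u.2 j + (1 - s) * ∑ j, d j * ys j := by
      rw [Finset.mul_sum, Finset.mul_sum, ← Finset.sum_add_distrib]
      exact Finset.sum_congr rfl fun j _ => by ring
    have h3 : ∑ i ∈ univ.filter (fun i => xs i ≤ 1/2), (s * u.1 i + (1 - s) * xs i)
        = s * ∑ i ∈ univ.filter (fun i => xs i ≤ 1/2), u.1 i
          + (1 - s) * ∑ i ∈ univ.filter (fun i => xs i ≤ 1/2), xs i := by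
      rw [Finset.mul_sum, Finset.mul_sum, ← Finset.sum_add_distrib]
    have h4 : ∑ j ∈ univ.filter (fun j => ¬ xs j ≤ 1/2), (1 - (s * u.1 j + (1 - s) * xs j))
        = s * ∑ j ∈ univ.filter (fun j => ¬ xs j ≤ 1/2), (1 - u.1 j)
          + (1 - s) * ∑ j ∈ univ.filter (fun j => ¬ xs j ≤ 1/2), (1 - xs j) := by
      rw [Finset.mul_sum, Finset.mul_sum, ← Finset.sum_add_distrib]
      exact Finset.sum_congr rfl fun j _ => by ring
    rw [h1, h2, h3, h4]; ring
  obtain ⟨r, hr, hmin⟩ := hloc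
  intro u huK
  show G (xs, ys) ≤ G u
  set N : ℝ := ‖u - (xs, ys)‖ with hN
  have hN0 : (0:ℝ) ≤ N := norm_nonneg _
  set s : ℝ := min (1/2) (r / (N + 1)) with hs
  have hs0 : 0 < s := lt_min (by norm_num) (by positivity)
  have hs1 : s ≤ 1/2 := min_le_left _ _
  have h1s : (0:ℝ) ≤ 1 - s := by linarith
  have hus : s • u + (1 - s) • (xs, ys) ∈ K :=
    hKconv huK hu hs0.le h1s (by ring)
  have hnorm : ‖(s • u + (1 - s) • (xs, ys)) - (xs, ys)‖ < r := by
    have hrw : (s • u + (1 - s) • (xs, ys)) - (xs, ys) = s • (u - (xs, ys)) := by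
      module
    rw [hrw, norm_smul, Real.norm_of_nonneg hs0.le]
    have h1 : s * N ≤ (r / (N + 1)) * N :=
      mul_le_mul_of_nonneg_right (min_le_right _ _) hN0
    have h2 : (r / (N + 1)) * N < r := by
      rw [div_mul_eq_mul_div, div_lt_iff₀ (by positivity)]
      nlinarith
    exact lt_of_le_of_lt h1 h2
  have hloc' := hmin _ hus hnorm
  have hmain : F (xs, ys) ≤ F (s • u + (1 - s) • (xs, ys)) := hloc'
  have hchain : G (xs, ys) ≤ s * G u + (1 - s) * G (xs, ys) := by
    calc G (xs, ys) = F (xs, ys) := hEq.symm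
    _ ≤ F (s • u + (1 - s) • (xs, ys)) := hmain
    _ ≤ G (s • u + (1 - s) • (xs, ys)) := hFG _
    _ = s * G u + (1 - s) * G (xs, ys) := haff s u
  have : s * G (xs, ys) ≤ s * G u := by linarith
  exact le_of_mul_le_mul_left this hs0
end

section
/- Type-II DC cut validity: suppose u* = (x*, y*) ∈ K with p(x*) ∉ ℤ, and suppose the valid inequality l_{u*}(x) ≥ l_{u*}(x*) holds for all (x,y) ∈ K. Then u* violates the inequality l_{u*}(x) ≥ ⌈l_{u*}(x*)⌉, while every point (x,y) ∈ K with x ∈ {0,1}^n satisfies l_{u*}(x) ≥ ⌈l_{u*}(x*)⌉. -/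
open Finset Set

/-- Type-II DC cut validity. If u* = (x*,y*) ∈ K with p(x*) ∉ ℤ and
the valid inequality l_{u*}(x) ≥ l_{u*}(x*) holds on K, then u* violates
l_{u*}(x) ≥ ⌈l_{u*}(x*)⌉ while every (x,y) ∈ K with x binary satisfies it. -/
theorem stmt_8 (n q : ℕ) (hn : 1 ≤ n)
    (K : Set ((Fin n → ℝ) × (Fin q → ℝ))) (hKne : K.Nonempty)
    (hKbox : ∀ u ∈ K, ∀ i, u.1 i ∈ Set.Icc (0:ℝ) 1)
    (xs : Fin n → ℝ) (ys : Fin q → ℝ) (hu : (xs, ys) ∈ K)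
    (hnotint : ¬ ∃ z : ℤ, (∑ i, min (xs i) (1 - xs i)) = (z : ℝ))
    (hvalid : ∀ u ∈ K,
      (∑ i ∈ univ.filter (fun i => xs i ≤ 1/2), u.1 i
        + ∑ j ∈ univ.filter (fun j => ¬ xs j ≤ 1/2), (1 - u.1 j))
      ≥ (∑ i ∈ univ.filter (fun i => xs i ≤ 1/2), xs i
        + ∑ j ∈ univ.filter (fun j => ¬ xs j ≤ 1/2), (1 - xs j))) :
    (∑ i ∈ univ.filter (fun i => xs i ≤ 1/2), xs i
        + ∑ j ∈ univ.filter (fun j => ¬ xs j ≤ 1/2), (1 - xs j))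
      < (⌈(∑ i ∈ univ.filter (fun i => xs i ≤ 1/2), xs i
        + ∑ j ∈ univ.filter (fun j => ¬ xs j ≤ 1/2), (1 - xs j))⌉ : ℝ)
    ∧ ∀ u ∈ K, (∀ i, u.1 i = 0 ∨ u.1 i = 1) →
      (∑ i ∈ univ.filter (fun i => xs i ≤ 1/2), u.1 i
        + ∑ j ∈ univ.filter (fun j => ¬ xs j ≤ 1/2), (1 - u.1 j))
      ≥ (⌈(∑ i ∈ univ.filter (fun i => xs i ≤ 1/2), xs i
        + ∑ j ∈ univ.filter (fun j => ¬ xs j ≤ 1/2), (1 - xs j))⌉ : ℝ) := by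
  set L : ℝ := (∑ i ∈ univ.filter (fun i => xs i ≤ 1/2), xs i
        + ∑ j ∈ univ.filter (fun j => ¬ xs j ≤ 1/2), (1 - xs j)) with hL
  have hLmin : L = ∑ i, min (xs i) (1 - xs i) := by
    rw [hL, ← Finset.sum_filter_add_sum_filter_not univ (fun i => xs i ≤ 1/2)
      (fun i => min (xs i) (1 - xs i))]
    congr 1
    · exact Finset.sum_congr rfl fun i hi => by
        have := (Finset.mem_filter.mp hi).2
        rw [min_eq_left (by linarith)]
    · exact Finset.sum_congr rfl fun i hi => by
        have := (Finset.mem_filter.mp hi).2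
        push_neg at this
        rw [min_eq_right (by linarith)]
  have hLni : ∀ z : ℤ, L ≠ (z : ℝ) := by
    intro z hz; exact hnotint ⟨z, by rw [← hLmin]; exact hz⟩
  constructor
  · rcases lt_or_eq_of_le (Int.le_ceil L) with h | h
    · exact h
    · exact absurd h (hLni _)
  · intro u huK hbin
    have hZ : ∃ z : ℤ, (∑ i ∈ univ.filter (fun i => xs i ≤ 1/2), u.1 i
        + ∑ j ∈ univ.filter (fun j => ¬ xs j ≤ 1/2), (1 - u.1 j)) = (z : ℝ) := by
      have h1 : ∀ (s : Finset (Fin n)) (f : Fin n → ℝ),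
          (∀ i ∈ s, f i = 0 ∨ f i = 1) → ∃ z : ℤ, ∑ i ∈ s, f i = (z : ℝ) := by
        intro s f hf
        refine ⟨∑ i ∈ s, if f i = 0 then 0 else 1, ?_⟩
        push_cast
        refine Finset.sum_congr rfl fun i hi => ?_
        rcases hf i hi with h | h <;> simp [h]
      obtain ⟨z1, hz1⟩ := h1 _ (fun i => u.1 i) (fun i _ => hbin i)
      obtain ⟨z2, hz2⟩ := h1 _ (fun i => 1 - u.1 i) (fun i _ => by
        rcases hbin i with h | h <;> simp [h])
      exact ⟨z1 + z2, by push_cast; rw [hz1, hz2]⟩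
    obtain ⟨z, hz⟩ := hZ
    rw [hz]
    have := hvalid u huK
    rw [hz] at this
    exact_mod_cast Int.ceil_le.mpr this
end

section
/- Local optimality of DCA critical points away from 1/2: let u* = (x*,y*) ∈ K with x*_i ≠ 1/2 for all i, and suppose ⟨∇(−h)(u*), u − u*⟩ ≥ 0 for all u ∈ K, where h(x,y) = −f(x,y) − t·p(x) is differentiable at u*. Then u* is a local minimizer of f + t·p over K. -/
open Finset Set

/-- Local optimality of DCA critical points away from 1/2.
If u* = (x*,y*) ∈ K with x*_i ≠ 1/2 for all i, and
⟨∇(−h)(u*), u − u*⟩ ≥ 0 for all u ∈ K where −h = f + t·p has gradient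
((c_i + t·z_i)_i, d) with z_i = 1 if x*_i < 1/2 and z_i = −1 otherwise,
then u* is a local minimizer of f + t·p over K. -/
theorem stmt_17 (n q : ℕ) (hn : 1 ≤ n)
    (c : Fin n → ℝ) (d : Fin q → ℝ) (t : ℝ) (ht : 0 ≤ t)
    (K : Set ((Fin n → ℝ) × (Fin q → ℝ)))
    (hKne : K.Nonempty) (hKconv : Convex ℝ K)
    (hKbox : ∀ u ∈ K, ∀ i, u.1 i ∈ Set.Icc (0:ℝ) 1)
    (xs : Fin n → ℝ) (ys : Fin q → ℝ) (hu : (xs, ys) ∈ K)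
    (hhalf : ∀ i, xs i ≠ 1/2)
    (hgrad : ∀ u ∈ K,
      (∑ i, (c i + t * (if xs i < 1/2 then (1:ℝ) else -1)) * (u.1 i - xs i))
        + (∑ j, d j * (u.2 j - ys j)) ≥ 0) :
    ∃ r > (0:ℝ), ∀ u ∈ K, ‖u - (xs, ys)‖ < r →
      (∑ i, c i * xs i) + (∑ j, d j * ys j) + t * ∑ i, min (xs i) (1 - xs i)
        ≤ (∑ i, c i * u.1 i) + (∑ j, d j * u.2 j)
          + t * ∑ i, min (u.1 i) (1 - u.1 i) := by

  have hne : (Finset.univ : Finset (Fin n)).Nonempty := Finset.univ_nonempty_iff.mpr (Fin.pos_iff_nonempty.mp hn)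
  refine ⟨Finset.univ.inf' hne (fun i => |xs i - 1/2|), ?_, ?_⟩
  · rw [gt_iff_lt, Finset.lt_inf'_iff]
    exact fun i _ => abs_pos.mpr (sub_ne_zero.mpr (hhalf i))
  · intro u huK hur
    have hbnd : ∀ i, |u.1 i - xs i| < |xs i - 1/2| := by
      intro i
      have h1 : |u.1 i - xs i| ≤ ‖u - (xs, ys)‖ := by
        calc |u.1 i - xs i| = ‖(u.1 - xs) i‖ := by simp [Pi.sub_apply]
        _ ≤ ‖u.1 - xs‖ := norm_le_pi_norm _ i
        _ = ‖(u - (xs, ys)).1‖ := rfl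
        _ ≤ ‖u - (xs, ys)‖ := norm_fst_le _
      have h2 : ‖u - (xs, ys)‖ < |xs i - 1/2| :=
        lt_of_lt_of_le hur (Finset.inf'_le _ (Finset.mem_univ i))
      linarith
    have hmin : ∀ i, min (u.1 i) (1 - u.1 i) - min (xs i) (1 - xs i)
        = (if xs i < 1/2 then (1:ℝ) else -1) * (u.1 i - xs i) := by
      intro i
      have hb := hbnd i
      rw [abs_lt] at hb
      by_cases hc : xs i < 1/2
      · have habs : |xs i - 1/2| = 1/2 - xs i := by rw [abs_of_neg (by linarith)]; ring
        rw [habs] at hb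
        have h1 : u.1 i ≤ 1 - u.1 i := by linarith [hb.2]
        have h2 : xs i ≤ 1 - xs i := by linarith
        rw [min_eq_left h1, min_eq_left h2, if_pos hc]; ring
      · have hgt : 1/2 < xs i := lt_of_le_of_ne (not_lt.mp hc) (Ne.symm (hhalf i))
        have habs : |xs i - 1/2| = xs i - 1/2 := abs_of_pos (by linarith)
        rw [habs] at hb
        have h1 : 1 - u.1 i ≤ u.1 i := by linarith [hb.1]
        have h2 : 1 - xs i ≤ xs i := by linarith
        rw [min_eq_right h1, min_eq_right h2, if_neg hc]; ring
    have h1 : ∑ i, (c i + t * (if xs i < 1/2 then (1:ℝ) else -1)) * (u.1 i - xs i)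
        = (∑ i, c i * u.1 i - ∑ i, c i * xs i)
          + t * (∑ i, min (u.1 i) (1 - u.1 i) - ∑ i, min (xs i) (1 - xs i)) := by
      rw [← Finset.sum_sub_distrib, ← Finset.sum_sub_distrib, Finset.mul_sum,
        ← Finset.sum_add_distrib]
      refine Finset.sum_congr rfl fun i _ => ?_
      rw [hmin i]; ring
    have h2 : ∑ j, d j * (u.2 j - ys j) = ∑ j, d j * u.2 j - ∑ j, d j * ys j := by
      rw [← Finset.sum_sub_distrib]
      exact Finset.sum_congr rfl fun j _ => by ring
    have h3 := hgrad u huK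
    rw [h1, h2] at h3
    nlinarith [h3]
end
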